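/- Let Ψ : (0,1] → ℝ be C¹, strictly decreasing (Ψ' < 0), with Ψ(y) → +∞ as y → 0⁺. Consider a solution (X, Φ) of X' = R cos Φ/√(1+R²), Φ' = −(N/√(1+R²))Ψ'(NX) with Φ strictly increasing, Φ(t) ∈ (π/2, 3π/2), and NX(s) ∈ (0,1] on the maximal interval. If t* > t satisfies Φ(t*) = 3π − Φ(t), then X(t*) = X(t), V₁(t*) = −V₁(t), and V₂(t*) = V₂(t), where V₁ = R cos Φ, V₂ = R sin Φ. -/

import Mathlib

open Real Set Filter

/-- Specular reflection of the model trajectory: if `Φ(t*) = 3π − Φ(t)`, then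
`X(t*) = X(t)`, `V₁(t*) = −V₁(t)` and `V₂(t*) = V₂(t)`, where
`V₁ = R cos Φ`, `V₂ = R sin Φ`. -/
theorem stmt_7 (Ψ Ψ' : ℝ → ℝ)
    (hΨ : ∀ y ∈ Set.Ioc (0:ℝ) 1, HasDerivAt Ψ (Ψ' y) y)
    (hΨ'neg : ∀ y ∈ Set.Ioc (0:ℝ) 1, Ψ' y < 0)
    (hΨinf : Tendsto Ψ (nhdsWithin 0 (Set.Ioi 0)) atTop)
    (R N : ℝ) (hR : 0 < R) (hN : 1 ≤ N)
    (t tstar : ℝ) (ht : t < tstar)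
    (X Φ : ℝ → ℝ)
    (hdom : ∀ s ∈ Set.Icc t tstar, N * X s ∈ Set.Ioc (0:ℝ) 1)
    (hX : ∀ s ∈ Set.Icc t tstar,
      HasDerivAt X (R * Real.cos (Φ s) / Real.sqrt (1 + R ^ 2)) s)
    (hΦ : ∀ s ∈ Set.Icc t tstar,
      HasDerivAt Φ (-(N / Real.sqrt (1 + R ^ 2)) * Ψ' (N * X s)) s)
    (hmono : StrictMonoOn Φ (Set.Icc t tstar))
    (hΦt : Φ t ∈ Set.Ioo (π / 2) (3 * π / 2))
    (hΦtstar : Φ tstar = 3 * π - Φ t) :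
    X tstar = X t ∧
      R * Real.cos (Φ tstar) = -(R * Real.cos (Φ t)) ∧
      R * Real.sin (Φ tstar) = R * Real.sin (Φ t) := by
  have hsin : Real.sin (Φ tstar) = Real.sin (Φ t) := by
    rw [hΦtstar, show 3 * π - Φ t = (π - Φ t) + 2 * π by ring,
      Real.sin_add_two_pi, Real.sin_pi_sub]
  have hcos : Real.cos (Φ tstar) = -Real.cos (Φ t) := by
    rw [hΦtstar, show 3 * π - Φ t = (π - Φ t) + 2 * π by ring,
      Real.cos_add_two_pi, Real.cos_pi_sub]
  -- conserved quantity
  set g : ℝ → ℝ := fun s => Ψ (N * X s) + R * Real.sin (Φ s) with hg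
  have hgd : ∀ s ∈ Set.Icc t tstar, HasDerivAt g 0 s := by
    intro s hs
    have h1 : HasDerivAt (fun s => Ψ (N * X s))
        (Ψ' (N * X s) * (N * (R * Real.cos (Φ s) / Real.sqrt (1 + R ^ 2)))) s :=
      (hΨ _ (hdom s hs)).comp s (((hX s hs).const_mul N))
    have h2 : HasDerivAt (fun s => R * Real.sin (Φ s))
        (R * (Real.cos (Φ s) * (-(N / Real.sqrt (1 + R ^ 2)) * Ψ' (N * X s)))) s :=
      (((hΦ s hs).sin)).const_mul R
    have := h1.add h2
    refine this.congr_deriv ?_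
    ring
  have hgc : ∀ s ∈ Set.Icc t tstar, g s = g t := by
    apply constant_of_has_deriv_right_zero
    · intro s hs
      exact (hgd s hs).continuousAt.continuousWithinAt
    · intro s hs
      exact (hgd s (Set.mem_Icc.mpr ⟨hs.1, hs.2.le⟩)).hasDerivWithinAt
  have hge : g tstar = g t := hgc tstar (Set.right_mem_Icc.mpr ht.le)
  have hΨeq : Ψ (N * X tstar) = Ψ (N * X t) := by
    have := hge
    simp only [hg, hsin] at this
    linarith
  -- Ψ strictly anti on Ioc 0 1
  have hanti : StrictAntiOn Ψ (Set.Ioc (0:ℝ) 1) := by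
    apply strictAntiOn_of_deriv_neg (convex_Ioc 0 1)
    · intro y hy
      exact (hΨ y hy).continuousAt.continuousWithinAt
    · intro y hy
      rw [interior_Ioc] at hy
      have hy' : y ∈ Set.Ioc (0:ℝ) 1 := ⟨hy.1, hy.2.le⟩
      rw [(hΨ y hy').deriv]
      exact hΨ'neg y hy'
  have hXeq : X tstar = X t := by
    have hinj := hanti.injOn
    have h := hinj (hdom tstar (Set.right_mem_Icc.mpr ht.le))
      (hdom t (Set.left_mem_Icc.mpr ht.le)) hΨeq
    have hN0 : N ≠ 0 := by linarith
    exact mul_left_cancel₀ hN0 h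
  exact ⟨hXeq, by rw [hcos]; ring, by rw [hsin]⟩
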